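/- (Support-function domain identity.) For a nonempty set A ⊆ X* (take X = ℝⁿ), the closure of dom σ_A equals the negative polar of the recession cone of cl co A: cl(dom σ_A) = ([cl co A]_∞)⁻, where σ_A(x) = sup_{a∈A}⟨a, x⟩ and K⁻ = {x : ⟨k, x⟩ ≤ 0 ∀k ∈ K}. -/

import Mathlib

open Set
open scoped RealInnerProductSpace Pointwise

noncomputable section

abbrev E (n : ℕ) := EuclideanSpace ℝ (Fin n)

/-- Recession cone with the convention `[∅]_∞ = {0}`. -/
def recCone {X : Type*} [NormedAddCommGroup X] [InnerProductSpace ℝ X] (C : Set X) : Set X :=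
  {d | (C = ∅ ∧ d = 0) ∨ (C.Nonempty ∧ ∀ a ∈ C, a + d ∈ C)}

/-- Closed convex hull. -/
def clco {X : Type*} [NormedAddCommGroup X] [InnerProductSpace ℝ X] (A : Set X) : Set X :=
  closure (convexHull ℝ A)

/-- ε-normal set to `C` at `x`. -/
def eNormal {X : Type*} [NormedAddCommGroup X] [InnerProductSpace ℝ X]
    (C : Set X) (x : X) (ε : ℝ) : Set X :=
  {v | ∀ y ∈ C, ⟪v, y - x⟫ ≤ ε}

/-- ε-subdifferential of an extended-real-valued function, empty unless `f x` is finite. -/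
def eSubdiff {X : Type*} [NormedAddCommGroup X] [InnerProductSpace ℝ X]
    (f : X → EReal) (x : X) (ε : ℝ) : Set X :=
  {v | (∃ r : ℝ, f x = (r : EReal)) ∧
    ∀ y, ((⟪v, y - x⟫ : ℝ) : EReal) + f x ≤ f y + (ε : EReal)}

/-- Convexity of an extended-real-valued function, via its epigraph. -/
def EpiConvex {X : Type*} [NormedAddCommGroup X] [InnerProductSpace ℝ X]
    (f : X → EReal) : Prop :=
  Convex ℝ {p : X × ℝ | f p.1 ≤ (p.2 : EReal)}

/-- Properness of an extended-real-valued function. -/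
def EProper {X : Type*} (f : X → EReal) : Prop :=
  (∀ y, f y ≠ ⊥) ∧ ∃ y, f y ≠ ⊤

/-- Lower semicontinuous (closed) hull: supremum of all lsc minorants. -/
def clHull {X : Type*} [TopologicalSpace X] (f : X → EReal) : X → EReal :=
  fun x => sSup {r : EReal | ∃ g : X → EReal, LowerSemicontinuous g ∧ g ≤ f ∧ g x = r}

open Classical in
/-- Indicator function with values in `EReal`. -/
def eInd {X : Type*} (C : Set X) (x : X) : EReal := if x ∈ C then 0 else ⊤

/-- Support function of a set. -/
def suppFn {X : Type*} [NormedAddCommGroup X] [InnerProductSpace ℝ X]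
    (A : Set X) (x : X) : EReal := ⨆ a ∈ A, ((⟪a, x⟫ : ℝ) : EReal)
-- characterization of the domain
lemma mem_dom_iff {n : ℕ} (A : Set (E n)) (x : E n) :
    suppFn A x ≠ ⊤ ↔ ∃ r : ℝ, ∀ a ∈ A, ⟪a, x⟫ ≤ r := by
  constructor
  · intro h
    obtain ⟨r, hr⟩ : ∃ r : ℝ, suppFn A x ≤ (r : EReal) := by
      have key : ∀ e : EReal, e ≠ ⊤ → ∃ r : ℝ, e ≤ (r : EReal) := by
        intro e
        induction e using EReal.rec with
        | bot => exact fun _ => ⟨0, bot_le⟩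
        | coe r => exact fun _ => ⟨r, le_rfl⟩
        | top => exact fun h => absurd rfl h
      exact key _ h
    refine ⟨r, fun a ha => ?_⟩
    have : ((⟪a, x⟫ : ℝ) : EReal) ≤ suppFn A x := by
      refine le_iSup₂ (f := fun a _ => ((⟪a, x⟫ : ℝ) : EReal)) a ha
    exact_mod_cast this.trans hr
  · rintro ⟨r, hr⟩
    have : suppFn A x ≤ (r : EReal) :=
      iSup₂_le fun a ha => EReal.coe_le_coe_iff.2 (hr a ha)
    exact (lt_of_le_of_lt this (EReal.coe_lt_top r)).ne

-- bound over the closed convex hull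
lemma bound_clco {n : ℕ} (A : Set (E n)) (x : E n) {r : ℝ}
    (hr : ∀ a ∈ A, ⟪a, x⟫ ≤ r) : ∀ a ∈ clco A, ⟪a, x⟫ ≤ r := by
  have hconv : Convex ℝ {a : E n | ⟪a, x⟫ ≤ r} :=
    convex_halfSpace_le ⟨fun a b => inner_add_left a b x,
      fun c a => real_inner_smul_left a x c⟩ r
  have hcl : IsClosed {a : E n | ⟪a, x⟫ ≤ r} :=
    isClosed_le (Continuous.inner continuous_id continuous_const) continuous_const
  exact fun a ha =>
    closure_minimal (convexHull_min hr hconv) hcl ha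

lemma separation {n : ℕ} (A : Set (E n)) {y : E n} (hy : y ∉ clco A) :
    ∃ (v : E n) (u : ℝ), (∀ c ∈ clco A, ⟪v, c⟫ < u) ∧ u < ⟪v, y⟫ := by
  obtain ⟨f, u, hfu, huy⟩ := geometric_hahn_banach_closed_point
    (convex_convexHull ℝ A).closure isClosed_closure hy
  refine ⟨(InnerProductSpace.toDual ℝ (E n)).symm f, u, fun c hc => ?_, ?_⟩
  · rw [InnerProductSpace.toDual_symm_apply]; exact hfu c hc
  · rw [InnerProductSpace.toDual_symm_apply]; exact huy

theorem stmt18 {n : ℕ} (A : Set (E n)) (hA : A.Nonempty) :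
    closure {x | suppFn A x ≠ ⊤} = {x | ∀ k ∈ recCone (clco A), ⟪k, x⟫ ≤ 0} := by
  obtain ⟨a₀, ha₀⟩ := hA
  have ha₀C : a₀ ∈ clco A := subset_closure (subset_convexHull ℝ A ha₀)
  have hCne : (clco A).Nonempty := ⟨a₀, ha₀C⟩
  have hAC : A ⊆ clco A := fun b hb => subset_closure (subset_convexHull ℝ A hb)
  set D : Set (E n) := {x | suppFn A x ≠ ⊤} with hD
  -- membership in recCone
  have hrec : ∀ d, d ∈ recCone (clco A) ↔ ∀ a ∈ clco A, a + d ∈ clco A := by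
    intro d
    constructor
    · rintro (⟨h, _⟩ | ⟨_, h⟩)
      · exact absurd h hCne.ne_empty
      · exact h
    · intro h; exact Or.inr ⟨hCne, h⟩
  -- Claim 1: recCone (clco A) = polar of D
  have claim1 : recCone (clco A) = {d | ∀ x ∈ D, ⟪d, x⟫ ≤ 0} := by
    ext d
    rw [hrec]
    constructor
    · intro hd x hx
      obtain ⟨r, hr⟩ := (mem_dom_iff A x).1 hx
      have hrC := bound_clco A x hr
      have hiter : ∀ m : ℕ, a₀ + m • d ∈ clco A := by
        intro m
        induction m with
        | zero => simpa using ha₀C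
        | succ k ih =>
          have := hd _ ih
          rw [succ_nsmul, ← add_assoc]
          exact this
      by_contra hpos
      push_neg at hpos
      obtain ⟨m, hm⟩ := exists_nat_gt ((r - ⟪a₀, x⟫) / ⟪d, x⟫)
      have hb := hrC _ (hiter m)
      rw [inner_add_left] at hb
      have : (m : ℝ) * ⟪d, x⟫ ≤ r - ⟪a₀, x⟫ := by
        have : ⟪m • d, x⟫ = (m : ℝ) * ⟪d, x⟫ := by
          rw [← Nat.cast_smul_eq_nsmul ℝ, real_inner_smul_left]
        linarith [hb, this ▸ hb]
      have := (div_lt_iff₀ hpos).1 hm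
      linarith
    · intro hd a ha
      by_contra hnot
      obtain ⟨v, u, hvc, hvu⟩ := separation A hnot
      have hvD : v ∈ D := by
        rw [hD, mem_setOf_eq, mem_dom_iff]
        exact ⟨u, fun b hb => by rw [real_inner_comm]; exact (hvc b (hAC hb)).le⟩
      have h1 : ⟪d, v⟫ ≤ 0 := hd v hvD
      have h2 : ⟪v, a⟫ < u := hvc a ha
      rw [inner_add_right] at hvu
      rw [real_inner_comm] at h1
      linarith
  rw [claim1]
  -- now bipolar
  -- D as a convex cone
  have hzero : (0 : E n) ∈ D := by
    rw [hD, mem_setOf_eq, mem_dom_iff]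
    exact ⟨0, fun a _ => by simp⟩
  have hsmul : ∀ (c : ℝ), 0 < c → ∀ x ∈ D, c • x ∈ D := by
    intro c hc x hx
    rw [hD, mem_setOf_eq, mem_dom_iff] at hx ⊢
    obtain ⟨r, hr⟩ := hx
    refine ⟨c * r, fun a ha => ?_⟩
    rw [real_inner_smul_right]
    exact mul_le_mul_of_nonneg_left (hr a ha) hc.le
  have hadd : ∀ x ∈ D, ∀ y ∈ D, x + y ∈ D := by
    intro x hx y hy
    rw [hD, mem_setOf_eq, mem_dom_iff] at hx hy ⊢
    obtain ⟨r, hr⟩ := hx; obtain ⟨s, hs⟩ := hy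
    refine ⟨r + s, fun a ha => ?_⟩
    rw [inner_add_right]
    exact add_le_add (hr a ha) (hs a ha)
  have hsmul0 : ∀ (c : ℝ), 0 ≤ c → ∀ x ∈ D, c • x ∈ D := by
    intro c hc x hx
    rcases hc.eq_or_lt with h0 | h0
    · rw [← h0, zero_smul]; exact hzero
    · exact hsmul c h0 x hx
  ext x
  simp only [mem_setOf_eq]
  constructor
  · intro hx k hk
    have hclosed : IsClosed {z : E n | ⟪k, z⟫ ≤ 0} :=
      isClosed_le (Continuous.inner continuous_const continuous_id) continuous_const
    exact hclosed.closure_subset_iff.2 (fun z hz => hk z hz) hx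
  · intro h
    by_contra hx
    have hDconv : Convex ℝ D := by
      intro a ha b hb s t hs ht _
      exact hadd _ (hsmul0 s hs a ha) _ (hsmul0 t ht b hb)
    obtain ⟨f, u, hfu, huy⟩ := geometric_hahn_banach_closed_point hDconv.closure isClosed_closure hx
    have hu : 0 < u := by simpa using hfu 0 (subset_closure hzero)
    have hv : ∀ z ∈ D, ⟪(InnerProductSpace.toDual ℝ (E n)).symm f, z⟫ ≤ 0 := by
      intro z hz
      rw [InnerProductSpace.toDual_symm_apply]
      by_contra hpos; push_neg at hpos
      obtain ⟨m, hm⟩ := exists_nat_gt (u / f z)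
      have h1 := hfu _ (subset_closure (hsmul0 m m.cast_nonneg z hz))
      rw [map_smul, smul_eq_mul] at h1
      rw [div_lt_iff₀ hpos] at hm
      linarith
    have := h _ hv
    rw [InnerProductSpace.toDual_symm_apply] at this
    linarith
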